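/- Let Ω ⊆ V be a transitive state space whose inner product ⟪·,·⟫ is GL(Ω)-invariant and whose positive cone V₊ is self-dual with respect to ⟪·,·⟫, and let ω_M be a GL(Ω)-invariant state with ‖ω_M‖ = 1 and ⟪ω_M, ω⟫ = 1 for all ω ∈ Ω. Let F and G be ideal measurements with outcome sets finite metric spaces (A, d_A) and (B, d_B), let M̃ be an approximate joint measurement of (F, G) with marginals M̃^F and M̃^G, and let ε₁, ε₂ ∈ [0,1] satisfy ε₁ + ε₂ ≤ 1. Then there exists a state ω ∈ Ω such that 𝒲_{ε₁}(M̃^F, F) ≥ W_{ε₁+ε₂}(ω^F) and 𝒲_{ε₂}(M̃^G, G) ≥ W_{ε₁+ε₂}(ω^G). -/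

import Mathlib

open RealInnerProductSpace

variable {V : Type*} [NormedAddCommGroup V] [InnerProductSpace ℝ V] [FiniteDimensional ℝ V]

/-- A state space: nonempty compact convex set whose affine hull misses `0` and has
dimension `dim V - 1` (so it spans `V`). -/
def IsStateSpace (Ω : Set V) : Prop :=
  Ω.Nonempty ∧ IsCompact Ω ∧ Convex ℝ Ω ∧ (0 : V) ∉ affineSpan ℝ Ω ∧
    Module.finrank ℝ (vectorSpan ℝ Ω) + 1 = Module.finrank ℝ V

/-- The group `GL(Ω)` of linear bijections preserving `Ω`. -/
def autGroup (Ω : Set V) : Set (V ≃ₗ[ℝ] V) := {T | T '' Ω = Ω}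

/-- Transitivity of the action of `GL(Ω)` on the extreme points of `Ω`. -/
def IsTransitive (Ω : Set V) : Prop :=
  ∀ ω₁ ∈ Set.extremePoints ℝ Ω, ∀ ω₂ ∈ Set.extremePoints ℝ Ω,
    ∃ T ∈ autGroup Ω, T ω₁ = ω₂

/-- The inner product of `V` is invariant under `GL(Ω)`. -/
def InvariantInner (Ω : Set V) : Prop :=
  ∀ T ∈ autGroup Ω, ∀ x y : V, ⟪T x, T y⟫ = ⟪x, y⟫

/-- The positive cone generated by `Ω`. -/
def posCone (Ω : Set V) : Set V := {x | ∃ l : ℝ, ∃ ω ∈ Ω, 0 ≤ l ∧ x = l • ω}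

/-- Self-duality of the positive cone with respect to the inner product of `V`. -/
def SelfDualCone (Ω : Set V) : Prop :=
  posCone Ω = {y | ∀ x ∈ posCone Ω, 0 ≤ ⟪x, y⟫}

/-- An effect on `Ω`. -/
def IsEffect (Ω : Set V) (e : V) : Prop := ∀ ω ∈ Ω, 0 ≤ ⟪e, ω⟫ ∧ ⟪e, ω⟫ ≤ 1

/-- A measurement with outcome set `A`: a family of nonzero effects summing to the
unit effect `ωM`. -/
def IsMeasurement (Ω : Set V) (ωM : V) {A : Type*} [Fintype A] (f : A → V) : Prop :=
  (∀ a, f a ≠ 0 ∧ IsEffect Ω (f a)) ∧ ∑ a, f a = ωM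

/-- An ideal measurement. -/
def IsIdeal (Ω : Set V) (ωM : V) {A : Type*} [Fintype A] (f : A → V) : Prop :=
  IsMeasurement Ω ωM f ∧
    ∃ c : ℝ, 0 < c ∧ (∀ ω ∈ Set.extremePoints ℝ Ω, ‖ω‖ = c) ∧
      ∀ a, ∃ S : Finset V, ↑S ⊆ Set.extremePoints ℝ Ω ∧
        (f a = (c ^ 2)⁻¹ • ∑ ω' ∈ S, ω' ∨ f a = ωM - (c ^ 2)⁻¹ • ∑ ω' ∈ S, ω')

/-- First marginal of a joint measurement. -/
def margF {A B : Type*} [Fintype B] (m : A × B → V) : A → V := fun a => ∑ b, m (a, b)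

/-- Second marginal of a joint measurement. -/
def margG {A B : Type*} [Fintype A] (m : A × B → V) : B → V := fun b => ∑ a, m (a, b)

open Classical in
/-- `∑_{a' : d(a',a) ≤ w/2} ⟪f a', ω⟫`. -/
noncomputable def ballSum {A : Type*} [Fintype A] [MetricSpace A]
    (f : A → V) (ω : V) (a : A) (w : ℝ) : ℝ :=
  ∑ a' ∈ Finset.univ.filter (fun x => dist x a ≤ w / 2), ⟪f a', ω⟫

/-- Overall width of the distribution of `f` on `ω` at confidence level `1 - ε`. -/
noncomputable def overallWidth {A : Type*} [Fintype A] [MetricSpace A]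
    (f : A → V) (ω : V) (ε : ℝ) : ℝ :=
  sInf {w : ℝ | 0 < w ∧ ∃ a : A, 1 - ε ≤ ballSum f ω a w}

/-- Error bar width of `ft` relative to `f`. -/
noncomputable def errorBarWidth (Ω : Set V) {A : Type*} [Fintype A] [MetricSpace A]
    (ft f : A → V) (ε : ℝ) : ℝ :=
  sInf {w : ℝ | 0 < w ∧ ∀ a : A, ∀ ω ∈ Ω, ⟪f a, ω⟫ = 1 → 1 - ε ≤ ballSum ft ω a w}

/-- Werner's measure `D_W(ft, f)`. -/
noncomputable def wernerD (Ω : Set V) {A : Type*} [Fintype A] [MetricSpace A]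
    (ft f : A → V) : ℝ :=
  sSup {d : ℝ | ∃ ω ∈ Ω, ∃ h : A → ℝ, (∀ a₁ a₂ : A, |h a₁ - h a₂| ≤ dist a₁ a₂) ∧
    d = |∑ a, h a * (⟪ft a, ω⟫ - ⟪f a, ω⟫)|}

/-- `l∞` distance `D_∞(ft, f)`. -/
noncomputable def dInfty (Ω : Set V) {A : Type*} (ft f : A → V) : ℝ :=
  sSup {d : ℝ | ∃ ω ∈ Ω, ∃ a : A, d = |⟪ft a, ω⟫ - ⟪f a, ω⟫|}

/-- Minimum localization error `LE(ω^F)`. -/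
noncomputable def locError {A : Type*} [Fintype A] [Nonempty A] (f : A → V) (ω : V) : ℝ :=
  1 - Finset.univ.sup' Finset.univ_nonempty (fun a => ⟪f a, ω⟫)


section Helpers

set_option linter.unusedSectionVars false

variable {V : Type*} [NormedAddCommGroup V] [InnerProductSpace ℝ V] [FiniteDimensional ℝ V]
variable {Ω : Set V}

private lemma mem_posCone_of_mem {ω : V} (hω : ω ∈ Ω) : ω ∈ posCone Ω :=
  ⟨1, ω, hω, zero_le_one, (one_smul ℝ ω).symm⟩

private lemma posCone_inner_nonneg (hsd : SelfDualCone Ω) {x y : V}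
    (hx : x ∈ posCone Ω) (hy : y ∈ posCone Ω) : 0 ≤ ⟪x, y⟫ := by
  rw [hsd] at hy; exact hy x hx

private lemma effect_mem_posCone (hsd : SelfDualCone Ω) {e : V}
    (he : ∀ ω ∈ Ω, 0 ≤ ⟪e, ω⟫) : e ∈ posCone Ω := by
  rw [hsd]
  rintro x ⟨l, ω, hω, hl, rfl⟩
  rw [real_inner_smul_left]
  exact mul_nonneg hl (by rw [real_inner_comm]; exact he ω hω)

private lemma normalize_posCone {ωM : V} (hωMunit : ∀ ω ∈ Ω, ⟪ωM, ω⟫ = 1) {x : V}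
    (hx : x ∈ posCone Ω) (hx0 : x ≠ 0) :
    0 < ⟪ωM, x⟫ ∧ ⟪ωM, x⟫⁻¹ • x ∈ Ω := by
  obtain ⟨l, ω, hω, hl, rfl⟩ := hx
  have hin : ⟪ωM, l • ω⟫ = l := by rw [real_inner_smul_right, hωMunit ω hω, mul_one]
  have hl0 : l ≠ 0 := by rintro rfl; simp at hx0
  refine ⟨by rw [hin]; exact lt_of_le_of_ne hl (Ne.symm hl0), ?_⟩
  rw [hin, inv_smul_smul₀ hl0]
  exact hω

/-- Key property of ideal measurements: `⟪f a, f a⟫ = ⟪ωM, f a⟫`. -/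
private lemma ideal_self_inner (hsd : SelfDualCone Ω) {ωM : V}
    (hωMnorm : ‖ωM‖ = 1) (hωMunit : ∀ ω ∈ Ω, ⟪ωM, ω⟫ = 1)
    {A : Type*} [Fintype A] {f : A → V} (hF : IsIdeal Ω ωM f) (a : A) :
    ⟪f a, f a⟫ = ⟪ωM, f a⟫ := by
  obtain ⟨hmeas, c, hc, hnormc, hS⟩ := hF
  obtain ⟨S, hSsub, hform⟩ := hS a
  set u : V := ∑ ω' ∈ S, ω' with hu
  set e : V := (c ^ 2)⁻¹ • u with he
  have hc2 : (0:ℝ) < c ^ 2 := by positivity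
  have hsharp : ∀ σ ∈ S, ⟪e, σ⟫ = 1 := by
    intro σ hσ
    have hσext : σ ∈ Set.extremePoints ℝ Ω := hSsub hσ
    have hσΩ : σ ∈ Ω := extremePoints_subset hσext
    have hexp : ⟪e, σ⟫ = (c ^ 2)⁻¹ * ∑ ω' ∈ S, ⟪ω', σ⟫ := by
      rw [he, real_inner_smul_left, hu, sum_inner]
    have hterm : ∀ ω' ∈ S, 0 ≤ ⟪ω', σ⟫ := fun ω' hω' =>
      posCone_inner_nonneg hsd
        (mem_posCone_of_mem (extremePoints_subset (hSsub hω')))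
        (mem_posCone_of_mem hσΩ)
    have hσσ : ⟪σ, σ⟫ = c ^ 2 := by
      rw [real_inner_self_eq_norm_sq, hnormc σ hσext]
    have hsum : c ^ 2 ≤ ∑ ω' ∈ S, ⟪ω', σ⟫ := by
      have := Finset.single_le_sum hterm hσ
      linarith
    have hge : 1 ≤ ⟪e, σ⟫ := by
      rw [hexp]
      calc (1:ℝ) = (c ^ 2)⁻¹ * c ^ 2 := by field_simp
        _ ≤ (c ^ 2)⁻¹ * ∑ ω' ∈ S, ⟪ω', σ⟫ :=
            mul_le_mul_of_nonneg_left hsum (by positivity)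
    have hle : ⟪e, σ⟫ ≤ 1 := by
      rcases hform with h | h
      · have := ((hmeas.1 a).2 σ hσΩ).2
        rw [h] at this
        exact this
      · have h0 := ((hmeas.1 a).2 σ hσΩ).1
        rw [h, inner_sub_left, hωMunit σ hσΩ] at h0
        linarith
    linarith
  have hcard : ∀ z : V, (∀ σ ∈ S, ⟪z, σ⟫ = 1) → ⟪z, e⟫ = (c ^ 2)⁻¹ * S.card := by
    intro z hz
    rw [he, real_inner_smul_right, hu, inner_sum]
    rw [Finset.sum_congr rfl hz, Finset.sum_const, nsmul_eq_mul, mul_one]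
  have hee : ⟪e, e⟫ = (c ^ 2)⁻¹ * S.card := hcard e hsharp
  have hMe : ⟪ωM, e⟫ = (c ^ 2)⁻¹ * S.card := hcard ωM
    (fun σ hσ => hωMunit σ (extremePoints_subset (hSsub hσ)))
  have hMM : ⟪ωM, ωM⟫ = 1 := by
    rw [real_inner_self_eq_norm_sq, hωMnorm]; norm_num
  rcases hform with h | h
  · rw [h, hee, hMe]
  · rw [h]
    rw [inner_sub_left, inner_sub_right, inner_sub_right, hMM, hee, hMe]
    have hcomm : ⟪e, ωM⟫ = ⟪ωM, e⟫ := real_inner_comm ωM e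
    rw [hcomm, hMe]
    ring

private lemma ballSum_mono {A : Type*} [Fintype A] [MetricSpace A] {f : A → V} {ω : V}
    (hnn : ∀ a, 0 ≤ ⟪f a, ω⟫) {a : A} {w w' : ℝ}
    (hsub : ∀ x : A, dist x a ≤ w / 2 → dist x a ≤ w' / 2) :
    ballSum f ω a w ≤ ballSum f ω a w' := by
  classical
  unfold ballSum
  apply Finset.sum_le_sum_of_subset_of_nonneg
  · intro x hx
    simp only [Finset.mem_filter, Finset.mem_univ, true_and] at hx ⊢
    exact hsub x hx
  · exact fun i _ _ => hnn i

private lemma exists_gap (A : Type*) [Fintype A] [MetricSpace A] (W : ℝ) :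
    ∃ w' : ℝ, W < w' ∧ ∀ x a : A, dist x a ≤ w' / 2 → dist x a ≤ W / 2 := by
  classical
  set D : Finset ℝ := (Finset.univ : Finset (A × A)).image (fun p => dist p.1 p.2) with hD
  set P : Finset ℝ := D.filter (fun d => W / 2 < d) with hP
  have hmemP : ∀ x a : A, W / 2 < dist x a → dist x a ∈ P := by
    intro x a h
    rw [hP, Finset.mem_filter]
    exact ⟨Finset.mem_image.mpr ⟨(x, a), Finset.mem_univ _, rfl⟩, h⟩
  by_cases hne : P.Nonempty
  · set dm := P.min' hne with hdmdef
    have hdm : W / 2 < dm := (Finset.mem_filter.mp (P.min'_mem hne)).2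
    refine ⟨min (W + 1) ((W + 2 * dm) / 2), lt_min (by linarith) (by linarith), ?_⟩
    intro x a h
    by_contra hgt
    push_neg at hgt
    have h1 : dm ≤ dist x a := P.min'_le _ (hmemP x a hgt)
    have h2 : min (W + 1) ((W + 2 * dm) / 2) ≤ (W + 2 * dm) / 2 :=
      min_le_right _ _
    linarith
  · refine ⟨W + 1, by linarith, ?_⟩
    intro x a h
    by_contra hgt
    push_neg at hgt
    exact hne ⟨dist x a, hmemP x a hgt⟩

private lemma ballSum_big {A : Type*} [Fintype A] [MetricSpace A] [Nonempty A]
    (h : A → V) :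
    ∃ wb : ℝ, 0 < wb ∧ ∀ (ω : V) (a : A), ballSum h ω a wb = ∑ x, ⟪h x, ω⟫ := by
  classical
  have hne : (Finset.univ : Finset (A × A)).Nonempty := Finset.univ_nonempty
  set R : ℝ := (Finset.univ : Finset (A × A)).sup' hne (fun p => dist p.1 p.2) with hR
  have hR0 : 0 ≤ R := by
    obtain ⟨a⟩ := ‹Nonempty A›
    have h0 : dist a a ≤ R := Finset.le_sup' (fun p : A × A => dist p.1 p.2) (Finset.mem_univ (a, a))
    exact dist_nonneg.trans h0
  refine ⟨2 * R + 1, by linarith, fun ω a => ?_⟩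
  unfold ballSum
  rw [Finset.filter_true_of_mem]
  intro x _
  have h0 : dist x a ≤ R := Finset.le_sup' (fun p : A × A => dist p.1 p.2) (Finset.mem_univ (x, a))
  linarith


private lemma exists_good_w {Ω : Set V} {ωM : V} (hωMunit : ∀ ω ∈ Ω, ⟪ωM, ω⟫ = 1)
    {A : Type*} [Fintype A] [Nonempty A] [MetricSpace A]
    (f em : A → V) (hemsum : ∑ x, em x = ωM)
    (hemnn : ∀ x, ∀ ω ∈ Ω, 0 ≤ ⟪em x, ω⟫) {ε : ℝ} (hε : 0 ≤ ε) :
    ∃ w' : ℝ, 0 < w' ∧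
      (∀ a, ∀ ω ∈ Ω, ⟪f a, ω⟫ = 1 → 1 - ε ≤ ballSum em ω a w') ∧
      (∀ x a : A, dist x a ≤ w' / 2 → dist x a ≤ (errorBarWidth Ω em f ε) / 2) ∧
      0 ≤ errorBarWidth Ω em f ε := by
  classical
  set S : Set ℝ :=
    {w : ℝ | 0 < w ∧ ∀ a : A, ∀ ω ∈ Ω, ⟪f a, ω⟫ = 1 → 1 - ε ≤ ballSum em ω a w} with hSdef
  have hEBW : errorBarWidth Ω em f ε = sInf S := rfl
  obtain ⟨wb, hwb0, hwb⟩ := ballSum_big (V := V) em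
  have hwbS : wb ∈ S := by
    refine ⟨hwb0, fun a ω hω _ => ?_⟩
    rw [hwb ω a, ← sum_inner, hemsum, hωMunit ω hω]
    linarith
  have hSne : S.Nonempty := ⟨wb, hwbS⟩
  have hW0 : 0 ≤ sInf S := le_csInf hSne fun w hw => hw.1.le
  obtain ⟨w', hw'W, hw'gap⟩ := exists_gap A (sInf S)
  obtain ⟨sb, hsbS, hsblt⟩ := exists_lt_of_csInf_lt hSne hw'W
  refine ⟨w', lt_of_le_of_lt hW0 hw'W, fun a ω hω hsharp => ?_, by rw [hEBW]; exact hw'gap,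
    by rw [hEBW]; exact hW0⟩
  refine (hsbS.2 a ω hω hsharp).trans (ballSum_mono (fun x => hemnn x ω hω) ?_)
  intro x hx
  linarith

private lemma tail_bound {Ω : Set V} (hsd : SelfDualCone Ω) {ωM : V}
    (hωMnorm : ‖ωM‖ = 1) (hωMunit : ∀ ω ∈ Ω, ⟪ωM, ω⟫ = 1)
    {A : Type*} [Fintype A] [MetricSpace A] {f : A → V} (hF : IsIdeal Ω ωM f)
    {em : A → V} (hemsum : ∑ x, em x = ωM)
    {w ε : ℝ}
    (hw : ∀ a, ∀ ω ∈ Ω, ⟪f a, ω⟫ = 1 → 1 - ε ≤ ballSum em ω a w) (a : A) :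
    ∑ x ∈ Finset.univ.filter (fun x => ¬ dist x a ≤ w / 2), ⟪em x, f a⟫
      ≤ ε * ⟪ωM, f a⟫ := by
  classical
  set s : ℝ := ⟪ωM, f a⟫ with hs
  have hfacone : f a ∈ posCone Ω :=
    effect_mem_posCone hsd (fun ω hω => ((hF.1.1 a).2 ω hω).1)
  obtain ⟨hspos, hωa⟩ := normalize_posCone hωMunit hfacone (hF.1.1 a).1
  have hsharp : ⟪f a, s⁻¹ • f a⟫ = 1 := by
    rw [real_inner_smul_right, ideal_self_inner hsd hωMnorm hωMunit hF a, ← hs]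
    field_simp
    exact div_self hspos.ne'
  have hball := hw a _ hωa hsharp
  set T : ℝ := ∑ x ∈ Finset.univ.filter (fun x => dist x a ≤ w / 2), ⟪em x, f a⟫ with hT
  have hbs : ballSum em (s⁻¹ • f a) a w = s⁻¹ * T := by
    unfold ballSum
    rw [hT, Finset.mul_sum]
    exact Finset.sum_congr rfl fun x _ => real_inner_smul_right _ _ _
  have htot : T + ∑ x ∈ Finset.univ.filter (fun x => ¬ dist x a ≤ w / 2), ⟪em x, f a⟫
      = s := by
    rw [hT, Finset.sum_filter_add_sum_filter_not, ← sum_inner, hemsum, hs,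
      real_inner_comm]
  rw [hbs] at hball
  have h2 := mul_le_mul_of_nonneg_left hball hspos.le
  rw [← mul_assoc, mul_inv_cancel₀ hspos.ne', one_mul] at h2
  nlinarith

private lemma exists_sharp_outcome {Ω : Set V} (hsd : SelfDualCone Ω) {ωM : V}
    (hωMunit : ∀ ω ∈ Ω, ⟪ωM, ω⟫ = 1) {T : Type*} [Fintype T]
    {m : T → V} (hM : IsMeasurement Ω ωM m) (p : T) :
    0 < ⟪ωM, m p⟫ ∧ ⟪ωM, m p⟫⁻¹ • m p ∈ Ω :=
  normalize_posCone hωMunit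
    (effect_mem_posCone hsd fun ω hω => ((hM.1 p).2 ω hω).1) (hM.1 p).1

end Helpers

/-- **Theorem 1 (paper).** In a transitive, self-dual GPT, for any approximate joint
measurement of a pair of ideal measurements, the error bar widths are bounded below by
the overall widths of some state. -/
theorem preparation_implies_measurement_errorBar
    {V : Type*} [NormedAddCommGroup V] [InnerProductSpace ℝ V] [FiniteDimensional ℝ V]
    {Ω : Set V} (hΩ : IsStateSpace Ω) (htrans : IsTransitive Ω)
    (hinv : InvariantInner Ω) (hsd : SelfDualCone Ω)
    {ωM : V} (hωMΩ : ωM ∈ Ω) (hωMfix : ∀ T ∈ autGroup Ω, T ωM = ωM)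
    (hωMnorm : ‖ωM‖ = 1) (hωMunit : ∀ ω ∈ Ω, ⟪ωM, ω⟫ = 1)
    {A B : Type*} [Fintype A] [MetricSpace A] [Fintype B] [MetricSpace B]
    {f : A → V} {g : B → V} (hF : IsIdeal Ω ωM f) (hG : IsIdeal Ω ωM g)
    {m : A × B → V} (hM : IsMeasurement Ω ωM m)
    {ε₁ ε₂ : ℝ} (hε₁ : ε₁ ∈ Set.Icc (0 : ℝ) 1) (hε₂ : ε₂ ∈ Set.Icc (0 : ℝ) 1)
    (hε : ε₁ + ε₂ ≤ 1) :
    ∃ ω ∈ Ω,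
      overallWidth f ω (ε₁ + ε₂) ≤ errorBarWidth Ω (margF m) f ε₁ ∧
      overallWidth g ω (ε₁ + ε₂) ≤ errorBarWidth Ω (margG m) g ε₂ := by
  classical
  have hA : Nonempty A := by
    rcases isEmpty_or_nonempty A with h | h
    · exfalso
      have h0 : ωM = 0 := by rw [← hF.1.2]; simp
      rw [h0] at hωMnorm; simp at hωMnorm
    · exact h
  have hB : Nonempty B := by
    rcases isEmpty_or_nonempty B with h | h
    · exfalso
      have h0 : ωM = 0 := by rw [← hG.1.2]; simp
      rw [h0] at hωMnorm; simp at hωMnorm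
    · exact h
  haveI := hA; haveI := hB
  have hMM : ⟪ωM, ωM⟫ = 1 := by rw [real_inner_self_eq_norm_sq, hωMnorm]; norm_num
  have hmargFsum : ∑ x, margF m x = ωM := by
    rw [← hM.2]; exact (Fintype.sum_prod_type _).symm
  have hmargGsum : ∑ y, margG m y = ωM := by
    rw [← hM.2]; exact (Fintype.sum_prod_type_right _).symm
  have hmargFnn : ∀ x, ∀ ω ∈ Ω, 0 ≤ ⟪margF m x, ω⟫ := by
    intro x ω hω
    rw [show margF m x = ∑ y, m (x, y) from rfl, sum_inner]
    exact Finset.sum_nonneg fun y _ => ((hM.1 (x, y)).2 ω hω).1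
  have hmargGnn : ∀ y, ∀ ω ∈ Ω, 0 ≤ ⟪margG m y, ω⟫ := by
    intro y ω hω
    rw [show margG m y = ∑ x, m (x, y) from rfl, sum_inner]
    exact Finset.sum_nonneg fun x _ => ((hM.1 (x, y)).2 ω hω).1
  obtain ⟨w₁, hw₁0, hw₁S, hw₁gap, hW₁0⟩ :=
    exists_good_w hωMunit f (margF m) hmargFsum hmargFnn hε₁.1
  obtain ⟨w₂, hw₂0, hw₂S, hw₂gap, hW₂0⟩ :=
    exists_good_w hωMunit g (margG m) hmargGsum hmargGnn hε₂.1
  set α : A × B → ℝ := fun p =>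
    ∑ a' ∈ Finset.univ.filter (fun a' => ¬ dist a' p.1 ≤ w₁ / 2), ⟪f a', m p⟫ with hα
  set β : A × B → ℝ := fun p =>
    ∑ b' ∈ Finset.univ.filter (fun b' => ¬ dist b' p.2 ≤ w₂ / 2), ⟪g b', m p⟫ with hβ
  set t : A × B → ℝ := fun p => ⟪ωM, m p⟫ with ht
  have hmcone : ∀ p : A × B, m p ∈ posCone Ω := fun p =>
    effect_mem_posCone hsd fun ω hω => ((hM.1 p).2 ω hω).1
  have hfcone : ∀ a, f a ∈ posCone Ω := fun a =>
    effect_mem_posCone hsd fun ω hω => ((hF.1.1 a).2 ω hω).1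
  have hgcone : ∀ b, g b ∈ posCone Ω := fun b =>
    effect_mem_posCone hsd fun ω hω => ((hG.1.1 b).2 ω hω).1
  have hαnn : ∀ p, 0 ≤ α p := fun p =>
    Finset.sum_nonneg fun a' _ => posCone_inner_nonneg hsd (hfcone a') (hmcone p)
  have hβnn : ∀ p, 0 ≤ β p := fun p =>
    Finset.sum_nonneg fun b' _ => posCone_inner_nonneg hsd (hgcone b') (hmcone p)
  have htsum : ∑ p : A × B, t p = 1 := by
    rw [ht, ← inner_sum, hM.2, hMM]
  have hαsum : ∑ p : A × B, α p ≤ ε₁ := by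
    have hswap : ∑ p : A × B, α p = ∑ a' : A,
        ∑ x ∈ Finset.univ.filter (fun x => ¬ dist x a' ≤ w₁ / 2), ⟪margF m x, f a'⟫ := by
      rw [Fintype.sum_prod_type]
      calc ∑ x : A, ∑ y : B, α (x, y)
          = ∑ x : A, ∑ y : B, ∑ a' : A,
              if ¬ dist a' x ≤ w₁ / 2 then ⟪f a', m (x, y)⟫ else 0 := by
            refine Finset.sum_congr rfl fun x _ => Finset.sum_congr rfl fun y _ => ?_
            exact Finset.sum_filter _ _
        _ = ∑ x : A, ∑ a' : A, ∑ y : B,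
              if ¬ dist a' x ≤ w₁ / 2 then ⟪f a', m (x, y)⟫ else 0 :=
            Finset.sum_congr rfl fun x _ => Finset.sum_comm
        _ = ∑ a' : A, ∑ x : A, ∑ y : B,
              if ¬ dist a' x ≤ w₁ / 2 then ⟪f a', m (x, y)⟫ else 0 := Finset.sum_comm
        _ = ∑ a' : A, ∑ x : A,
              if ¬ dist x a' ≤ w₁ / 2 then ⟪margF m x, f a'⟫ else 0 := by
            refine Finset.sum_congr rfl fun a' _ => Finset.sum_congr rfl fun x _ => ?_
            rw [dist_comm a' x]
            by_cases h : ¬ dist x a' ≤ w₁ / 2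
            · simp only [if_pos h]
              have hmx : ⟪margF m x, f a'⟫ = ∑ y : B, ⟪f a', m (x, y)⟫ := by
                rw [real_inner_comm]
                exact inner_sum _ _ _
              rw [hmx]
            · simp only [if_neg h, Finset.sum_const_zero]
        _ = ∑ a' : A, ∑ x ∈ Finset.univ.filter (fun x => ¬ dist x a' ≤ w₁ / 2),
              ⟪margF m x, f a'⟫ :=
            Finset.sum_congr rfl fun a' _ => (Finset.sum_filter _ _).symm
    rw [hswap]
    calc ∑ a' : A, ∑ x ∈ Finset.univ.filter (fun x => ¬ dist x a' ≤ w₁ / 2),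
          ⟪margF m x, f a'⟫
        ≤ ∑ a' : A, ε₁ * ⟪ωM, f a'⟫ :=
          Finset.sum_le_sum fun a' _ =>
            tail_bound hsd hωMnorm hωMunit hF hmargFsum hw₁S a'
      _ = ε₁ := by rw [← Finset.mul_sum, ← inner_sum, hF.1.2, hMM, mul_one]
  have hβsum : ∑ p : A × B, β p ≤ ε₂ := by
    have hswap : ∑ p : A × B, β p = ∑ b' : B,
        ∑ y ∈ Finset.univ.filter (fun y => ¬ dist y b' ≤ w₂ / 2), ⟪margG m y, g b'⟫ := by
      rw [Fintype.sum_prod_type_right]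
      calc ∑ y : B, ∑ x : A, β (x, y)
          = ∑ y : B, ∑ x : A, ∑ b' : B,
              if ¬ dist b' y ≤ w₂ / 2 then ⟪g b', m (x, y)⟫ else 0 := by
            refine Finset.sum_congr rfl fun y _ => Finset.sum_congr rfl fun x _ => ?_
            exact Finset.sum_filter _ _
        _ = ∑ y : B, ∑ b' : B, ∑ x : A,
              if ¬ dist b' y ≤ w₂ / 2 then ⟪g b', m (x, y)⟫ else 0 :=
            Finset.sum_congr rfl fun y _ => Finset.sum_comm
        _ = ∑ b' : B, ∑ y : B, ∑ x : A,
              if ¬ dist b' y ≤ w₂ / 2 then ⟪g b', m (x, y)⟫ else 0 := Finset.sum_comm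
        _ = ∑ b' : B, ∑ y : B,
              if ¬ dist y b' ≤ w₂ / 2 then ⟪margG m y, g b'⟫ else 0 := by
            refine Finset.sum_congr rfl fun b' _ => Finset.sum_congr rfl fun y _ => ?_
            rw [dist_comm b' y]
            by_cases h : ¬ dist y b' ≤ w₂ / 2
            · simp only [if_pos h]
              have hmy : ⟪margG m y, g b'⟫ = ∑ x : A, ⟪g b', m (x, y)⟫ := by
                rw [real_inner_comm]
                exact inner_sum _ _ _
              rw [hmy]
            · simp only [if_neg h, Finset.sum_const_zero]
        _ = ∑ b' : B, ∑ y ∈ Finset.univ.filter (fun y => ¬ dist y b' ≤ w₂ / 2),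
              ⟪margG m y, g b'⟫ :=
            Finset.sum_congr rfl fun b' _ => (Finset.sum_filter _ _).symm
    rw [hswap]
    calc ∑ b' : B, ∑ y ∈ Finset.univ.filter (fun y => ¬ dist y b' ≤ w₂ / 2),
          ⟪margG m y, g b'⟫
        ≤ ∑ b' : B, ε₂ * ⟪ωM, g b'⟫ :=
          Finset.sum_le_sum fun b' _ =>
            tail_bound hsd hωMnorm hωMunit hG hmargGsum hw₂S b'
      _ = ε₂ := by rw [← Finset.mul_sum, ← inner_sum, hG.1.2, hMM, mul_one]
  have hp : ∃ p : A × B, α p + β p ≤ (ε₁ + ε₂) * t p := by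
    by_contra hcon
    push_neg at hcon
    have hlt : ∑ p : A × B, (ε₁ + ε₂) * t p < ∑ p : A × B, (α p + β p) :=
      Finset.sum_lt_sum_of_nonempty Finset.univ_nonempty fun p _ => hcon p
    rw [← Finset.mul_sum, htsum, mul_one, Finset.sum_add_distrib] at hlt
    linarith
  obtain ⟨p₀, hp₀⟩ := hp
  obtain ⟨ht₀, hω₀⟩ := exists_sharp_outcome hsd hωMunit hM p₀
  set ω₀ : V := ⟪ωM, m p₀⟫⁻¹ • m p₀ with hω₀def
  have hα₀ := hαnn p₀
  have hβ₀ := hβnn p₀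
  have hballf : 1 - (ε₁ + ε₂) ≤ ballSum f ω₀ p₀.1 w₁ := by
    have hfil : ballSum f ω₀ p₀.1 w₁ = ⟪ωM, m p₀⟫⁻¹ *
        ∑ a' ∈ Finset.univ.filter (fun a' => dist a' p₀.1 ≤ w₁ / 2), ⟪f a', m p₀⟫ := by
      unfold ballSum
      rw [Finset.mul_sum]
      exact Finset.sum_congr rfl fun x _ => real_inner_smul_right _ _ _
    have htot : (∑ a' ∈ Finset.univ.filter (fun a' => dist a' p₀.1 ≤ w₁ / 2), ⟪f a', m p₀⟫)
        + α p₀ = ⟪ωM, m p₀⟫ := by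
      rw [hα, Finset.sum_filter_add_sum_filter_not, ← sum_inner, hF.1.2]
    rw [hfil, inv_mul_eq_div, le_div_iff₀ ht₀]
    nlinarith
  have hballg : 1 - (ε₁ + ε₂) ≤ ballSum g ω₀ p₀.2 w₂ := by
    have hfil : ballSum g ω₀ p₀.2 w₂ = ⟪ωM, m p₀⟫⁻¹ *
        ∑ b' ∈ Finset.univ.filter (fun b' => dist b' p₀.2 ≤ w₂ / 2), ⟪g b', m p₀⟫ := by
      unfold ballSum
      rw [Finset.mul_sum]
      exact Finset.sum_congr rfl fun y _ => real_inner_smul_right _ _ _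
    have htot : (∑ b' ∈ Finset.univ.filter (fun b' => dist b' p₀.2 ≤ w₂ / 2), ⟪g b', m p₀⟫)
        + β p₀ = ⟪ωM, m p₀⟫ := by
      rw [hβ, Finset.sum_filter_add_sum_filter_not, ← sum_inner, hG.1.2]
    rw [hfil, inv_mul_eq_div, le_div_iff₀ ht₀]
    nlinarith
  refine ⟨ω₀, hω₀, ?_, ?_⟩
  · apply le_of_forall_pos_le_add
    intro δ hδ
    have hmem : errorBarWidth Ω (margF m) f ε₁ + δ ∈
        {w : ℝ | 0 < w ∧ ∃ a : A, 1 - (ε₁ + ε₂) ≤ ballSum f ω₀ a w} := by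
      refine ⟨by linarith, p₀.1, hballf.trans (ballSum_mono ?_ ?_)⟩
      · exact fun a => ((hF.1.1 a).2 ω₀ hω₀).1
      · intro x hx
        have := hw₁gap x p₀.1 hx
        linarith
    exact csInf_le ⟨0, fun w hw => hw.1.le⟩ hmem
  · apply le_of_forall_pos_le_add
    intro δ hδ
    have hmem : errorBarWidth Ω (margG m) g ε₂ + δ ∈
        {w : ℝ | 0 < w ∧ ∃ b : B, 1 - (ε₁ + ε₂) ≤ ballSum g ω₀ b w} := by
      refine ⟨by linarith, p₀.2, hballg.trans (ballSum_mono ?_ ?_)⟩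
      · exact fun b => ((hG.1.1 b).2 ω₀ hω₀).1
      · intro y hy
        have := hw₂gap y p₀.2 hy
        linarith
    exact csInf_le ⟨0, fun w hw => hw.1.le⟩ hmem
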